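/- Fix integers K ≥ m ≥ 1, ε > 0, c : T_{K,m} → [0,1/K], and x, y ∈ [0,1]^K with ‖x − y‖_{ℓ∞} ≤ ε. Then the outputs P_{c,ε}(x) and P_{c,ε}(y) of the partition algorithm satisfy d_{T_{K,m}}(P_{c,ε}(x), P_{c,ε}(y)) ≤ 1, where d_{T_{K,m}} is the graph distance in the tree T_{K,m}. -/

import Mathlib

open Classical

noncomputable section

namespace MPB

variable (K m : ℕ)

/-- Max of `x` over a finite set of coordinates. -/
def fmax (x : Fin K → ℝ) (S : Finset (Fin K)) : ℝ := sSup (x '' ↑S)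

/-- Min of `x` over a finite set of coordinates. -/
def fmin (x : Fin K → ℝ) (S : Finset (Fin K)) : ℝ := sInf (x '' ↑S)

/-- range_B(x) = max_{k∈B} x(k) - min_{k∈B} x(k). -/
def rangeX (x : Fin K → ℝ) (B : Finset (Fin K)) : ℝ := fmax K x B - fmin K x B

/-- gap of the child obtained by splitting `B` into `T > B \ T`:
gap = min_{k∈T} x(k) - max_{ℓ∈B\T} x(ℓ). -/
def gapX (x : Fin K → ℝ) (T B : Finset (Fin K)) : ℝ := fmin K x T - fmax K x (B \ T)

/-- i(P): the largest `i` such that the first `i` parts of the ordered partition `L`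
have total size at most `m`. -/
def iIdx (L : List (Finset (Fin K))) : ℕ :=
  Nat.findGreatest (fun i => ((L.take i).map Finset.card).sum ≤ m) L.length

/-- A(P): the union of the first i(P) parts (the coordinates already identified as
belonging to the top m). -/
def Aset (L : List (Finset (Fin K))) : Finset (Fin K) :=
  (L.take (iIdx K m L)).foldr (· ∪ ·) ∅

/-- B(P): the currently undecided part; `∅` if `|A(P)| = m`, else the part S_{i(P)+1}. -/
def Bset (L : List (Finset (Fin K))) : Finset (Fin K) :=
  if (Aset K m L).card = m then ∅ else L.getD (iIdx K m L) ∅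

/-- A vertex of the tree T_{K,m} is encoded by the sequence of splits leading to it from
the root (head = most recently chosen top part): this recovers its underlying ordered
partition, by splitting at each step the then-current undecided set B into `T > B \ T`. -/
def partitionOf : List (Finset (Fin K)) → List (Finset (Fin K))
  | [] => [Finset.univ]
  | T :: l =>
    let L := partitionOf l
    let i := iIdx K m L
    L.take i ++ [T, L.getD i ∅ \ T] ++ L.drop (i + 1)

/-- A(P) for a vertex of T_{K,m}. -/
def Anode (l : List (Finset (Fin K))) : Finset (Fin K) := Aset K m (partitionOf K m l)

/-- B(P) for a vertex of T_{K,m}. -/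
def Bnode (l : List (Finset (Fin K))) : Finset (Fin K) := Bset K m (partitionOf K m l)

/-- Membership in T_{K,m}: each successive split must cut the current undecided set B
into a nonempty strict subset (the new top part) and the rest. The root is `[]`, a
vertex is a leaf iff its `Bnode` is empty, `T :: l` is a child of `l`, and the ancestors
of a vertex are exactly its list suffixes. -/
def Valid : List (Finset (Fin K)) → Prop
  | [] => True
  | T :: l => Valid l ∧ T.Nonempty ∧ T ⊂ Bnode K m l

/-- The elements of `B` sorted by `x` in (weakly) decreasing order,
ties broken by coordinate index (stability of merge sort). -/
def sortedB (x : Fin K → ℝ) (B : Finset (Fin K)) : List (Fin K) :=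
  (B.sort (· ≤ ·)).mergeSort (fun a b => decide (x b ≤ x a))

/-- The set `{a_1, …, a_j}` of the `j` largest coordinates of `B` under `x`. -/
def topSet (x : Fin K → ℝ) (B : Finset (Fin K)) (j : ℕ) : Finset (Fin K) :=
  ((sortedB K x B).take j).toFinset

/-- Line 7 of Algorithm 1: the algorithm, currently at the vertex `l`, returns `l`
because for some ancestor `q ⪯ l` and some child `q_j` of `q` (splitting B(q) at the
`j`-th position of the `x`-sorted order), the quantity `gap_{q_j}(x) - c(q)·range_q(x)`
is within `(d(l,q)+1)·6ε` of zero. -/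
def stopAt (c : List (Finset (Fin K)) → ℝ) (ε : ℝ) (x : Fin K → ℝ)
    (l : List (Finset (Fin K))) : Prop :=
  ∃ q ∈ l.tails, ∃ j, 1 ≤ j ∧ j < (Bnode K m q).card ∧
    |gapX K x (topSet K x (Bnode K m q) j) (Bnode K m q) - c q * rangeX K x (Bnode K m q)|
      ≤ ((l.length - q.length + 1 : ℕ) : ℝ) * (6 * ε)

/-- Lines 10-15 of Algorithm 1: move from `l` to the child `l_j` for the smallest
`j ∈ {1, …, ℓ-1}` with `gap_{l_j}(x) ≥ c(l)·range_l(x)`. -/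
def descend (c : List (Finset (Fin K)) → ℝ) (x : Fin K → ℝ)
    (l : List (Finset (Fin K))) : List (Finset (Fin K)) :=
  if h : ∃ j, 1 ≤ j ∧ j < (Bnode K m l).card ∧
      c l * rangeX K x (Bnode K m l)
        ≤ gapX K x (topSet K x (Bnode K m l) j) (Bnode K m l)
  then topSet K x (Bnode K m l) (Nat.find h) :: l
  else l

/-- The while loop of Algorithm 1, with fuel (the tree T_{K,m} has depth < K, so fuel K
suffices for the loop to terminate as in the paper). -/
def run (c : List (Finset (Fin K)) → ℝ) (ε : ℝ) (x : Fin K → ℝ) :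
    ℕ → List (Finset (Fin K)) → List (Finset (Fin K))
  | 0, l => l
  | n + 1, l =>
    if Bnode K m l = ∅ then l
    else if stopAt K m c ε x l then l
    else run c ε x n (descend K m c x l)

/-- The vertex P_{c,ε}(x) ∈ T_{K,m} output by Algorithm 1 on input x. The vertices
visited by the while loop are exactly the suffixes of the output. -/
def Pmap (c : List (Finset (Fin K)) → ℝ) (ε : ℝ) (x : Fin K → ℝ) :
    List (Finset (Fin K)) :=
  run K m c ε x K []

section Aux

variable {K : ℕ}

lemma fmax_eq_max' (x : Fin K → ℝ) {S : Finset (Fin K)} (hS : S.Nonempty) :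
    fmax K x S = (S.image x).max' (hS.image x) := by
  rw [fmax, ← Finset.coe_image, Finset.Nonempty.csSup_eq_max']

lemma fmin_eq_min' (x : Fin K → ℝ) {S : Finset (Fin K)} (hS : S.Nonempty) :
    fmin K x S = (S.image x).min' (hS.image x) := by
  rw [fmin, ← Finset.coe_image, Finset.Nonempty.csInf_eq_min']

lemma le_fmax (x : Fin K → ℝ) {S : Finset (Fin K)} {a : Fin K} (ha : a ∈ S) :
    x a ≤ fmax K x S := by
  rw [fmax_eq_max' x ⟨a, ha⟩]
  exact Finset.le_max' _ _ (Finset.mem_image_of_mem x ha)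

lemma fmin_le (x : Fin K → ℝ) {S : Finset (Fin K)} {a : Fin K} (ha : a ∈ S) :
    fmin K x S ≤ x a := by
  rw [fmin_eq_min' x ⟨a, ha⟩]
  exact Finset.min'_le _ _ (Finset.mem_image_of_mem x ha)

lemma fmax_le (x : Fin K → ℝ) {S : Finset (Fin K)} (hS : S.Nonempty) {v : ℝ}
    (h : ∀ a ∈ S, x a ≤ v) : fmax K x S ≤ v := by
  rw [fmax_eq_max' x hS]
  refine Finset.max'_le _ _ _ ?_
  rintro b hb
  obtain ⟨a, ha, rfl⟩ := Finset.mem_image.mp hb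
  exact h a ha

lemma le_fmin (x : Fin K → ℝ) {S : Finset (Fin K)} (hS : S.Nonempty) {v : ℝ}
    (h : ∀ a ∈ S, v ≤ x a) : v ≤ fmin K x S := by
  rw [fmin_eq_min' x hS]
  refine Finset.le_min' _ _ _ ?_
  rintro b hb
  obtain ⟨a, ha, rfl⟩ := Finset.mem_image.mp hb
  exact h a ha

lemma exists_fmax (x : Fin K → ℝ) {S : Finset (Fin K)} (hS : S.Nonempty) :
    ∃ a ∈ S, fmax K x S = x a := by
  have := (S.image x).max'_mem (hS.image x)
  obtain ⟨a, ha, h⟩ := Finset.mem_image.mp this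
  exact ⟨a, ha, by rw [fmax_eq_max' x hS, h]⟩

lemma exists_fmin (x : Fin K → ℝ) {S : Finset (Fin K)} (hS : S.Nonempty) :
    ∃ a ∈ S, fmin K x S = x a := by
  have := (S.image x).min'_mem (hS.image x)
  obtain ⟨a, ha, h⟩ := Finset.mem_image.mp this
  exact ⟨a, ha, by rw [fmin_eq_min' x hS, h]⟩

lemma fmin_le_fmax (x : Fin K → ℝ) {S : Finset (Fin K)} (hS : S.Nonempty) :
    fmin K x S ≤ fmax K x S := by
  obtain ⟨a, ha⟩ := hS
  exact (fmin_le x ha).trans (le_fmax x ha)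

lemma rangeX_nonneg (x : Fin K → ℝ) {S : Finset (Fin K)} (hS : S.Nonempty) :
    0 ≤ rangeX K x S := sub_nonneg.mpr (fmin_le_fmax x hS)

lemma fmax_lip {x y : Fin K → ℝ} {ε : ℝ} (hxy : ∀ i, |x i - y i| ≤ ε)
    {S : Finset (Fin K)} (hS : S.Nonempty) : fmax K x S ≤ fmax K y S + ε := by
  refine fmax_le x hS fun a ha => ?_
  have h1 := abs_le.mp (hxy a)
  have h2 := le_fmax y ha
  linarith

lemma fmin_lip {x y : Fin K → ℝ} {ε : ℝ} (hxy : ∀ i, |x i - y i| ≤ ε)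
    {S : Finset (Fin K)} (hS : S.Nonempty) : fmin K y S - ε ≤ fmin K x S := by
  refine le_fmin x hS fun a ha => ?_
  have h1 := abs_le.mp (hxy a)
  have h2 := fmin_le y ha
  linarith

lemma abs_sub_comm' {x y : Fin K → ℝ} {ε : ℝ} (hxy : ∀ i, |x i - y i| ≤ ε) :
    ∀ i, |y i - x i| ≤ ε := fun i => by rw [abs_sub_comm]; exact hxy i

lemma rangeX_lip {x y : Fin K → ℝ} {ε : ℝ} (hxy : ∀ i, |x i - y i| ≤ ε)
    {S : Finset (Fin K)} (hS : S.Nonempty) :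
    |rangeX K x S - rangeX K y S| ≤ 2 * ε := by
  have hyx := abs_sub_comm' hxy
  have h1 := fmax_lip hxy hS
  have h2 := fmax_lip hyx hS
  have h3 := fmin_lip hxy hS
  have h4 := fmin_lip hyx hS
  rw [abs_le]
  constructor <;> [skip; skip] <;> unfold rangeX <;> linarith

/-! ### sortedB and topSet -/

lemma sortedB_perm (x : Fin K → ℝ) (B : Finset (Fin K)) :
    (sortedB K x B).Perm (B.sort (· ≤ ·)) := List.mergeSort_perm _ _

lemma sortedB_nodup (x : Fin K → ℝ) (B : Finset (Fin K)) :
    (sortedB K x B).Nodup :=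
  ((sortedB_perm x B).nodup_iff).mpr (Finset.sort_nodup _ _)

lemma sortedB_toFinset (x : Fin K → ℝ) (B : Finset (Fin K)) :
    (sortedB K x B).toFinset = B := by
  rw [List.toFinset_eq_of_perm _ _ (sortedB_perm x B), Finset.sort_toFinset]

lemma sortedB_length (x : Fin K → ℝ) (B : Finset (Fin K)) :
    (sortedB K x B).length = B.card :=
  ((sortedB_perm x B).length_eq).trans (Finset.length_sort _)

lemma sortedB_sorted (x : Fin K → ℝ) (B : Finset (Fin K)) :
    (sortedB K x B).Pairwise (fun a b => x b ≤ x a) := by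
  have h := List.pairwise_mergeSort (le := fun a b : Fin K => decide (x b ≤ x a))
    (fun a b c h1 h2 => by
      simp only [decide_eq_true_eq] at *
      exact le_trans h2 h1)
    (fun a b => by
      simp only [Bool.or_eq_true, decide_eq_true_eq]
      exact le_total (x b) (x a))
    (B.sort (· ≤ ·))
  simpa [sortedB] using h

lemma topSet_subset (x : Fin K → ℝ) (B : Finset (Fin K)) (j : ℕ) :
    topSet K x B j ⊆ B := by
  intro a ha
  rw [← sortedB_toFinset x B, List.mem_toFinset]
  rw [topSet, List.mem_toFinset] at ha
  exact List.mem_of_mem_take ha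

lemma card_topSet (x : Fin K → ℝ) {B : Finset (Fin K)} {j : ℕ} (hj : j ≤ B.card) :
    (topSet K x B j).card = j := by
  rw [topSet, List.toFinset_card_of_nodup
    ((List.take_sublist _ _).nodup (sortedB_nodup x B))]
  rw [List.length_take, sortedB_length]
  exact min_eq_left hj

lemma topSet_nonempty (x : Fin K → ℝ) {B : Finset (Fin K)} {j : ℕ}
    (h1 : 1 ≤ j) (h2 : j ≤ B.card) : (topSet K x B j).Nonempty := by
  rw [← Finset.card_pos, card_topSet x h2]; exact h1

lemma sdiff_topSet_nonempty (x : Fin K → ℝ) {B : Finset (Fin K)} {j : ℕ}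
    (h2 : j < B.card) : (B \ topSet K x B j).Nonempty := by
  rw [← Finset.card_pos, Finset.card_sdiff_of_subset (topSet_subset x B j),
    card_topSet x h2.le]
  omega

lemma mem_drop_of_mem_sdiff (x : Fin K → ℝ) {B : Finset (Fin K)} {j : ℕ}
    {b : Fin K} (hb : b ∈ B \ topSet K x B j) : b ∈ (sortedB K x B).drop j := by
  obtain ⟨hb1, hb2⟩ := Finset.mem_sdiff.mp hb
  have hbs : b ∈ sortedB K x B := by
    rw [← List.mem_toFinset, sortedB_toFinset]; exact hb1
  rw [topSet, List.mem_toFinset] at hb2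
  rw [← List.take_append_drop j (sortedB K x B)] at hbs
  rcases List.mem_append.mp hbs with h | h
  · exact absurd h hb2
  · exact h

lemma topSet_rel (x : Fin K → ℝ) {B : Finset (Fin K)} {j : ℕ} {a b : Fin K}
    (ha : a ∈ topSet K x B j) (hb : b ∈ B \ topSet K x B j) : x b ≤ x a := by
  have hs := sortedB_sorted x B
  rw [← List.take_append_drop j (sortedB K x B)] at hs
  exact (List.pairwise_append.mp hs).2.2 a (List.mem_toFinset.mp ha)
    b (mem_drop_of_mem_sdiff x hb)

/-- Any subset of `B` of size at least `j` contains an element whose `x`-value is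
at most the `j`-th largest `x`-value over `B`. -/
lemma exists_le_fmin_topSet (x : Fin K → ℝ) {B U : Finset (Fin K)} {j : ℕ}
    (h1 : 1 ≤ j) (h2 : j ≤ B.card) (hUB : U ⊆ B) (hU : j ≤ U.card) :
    ∃ a ∈ U, x a ≤ fmin K x (topSet K x B j) := by
  by_cases hUT : U ⊆ topSet K x B j
  · have hEq : U = topSet K x B j :=
      Finset.eq_of_subset_of_card_le hUT (by rw [card_topSet x h2]; exact hU)
    obtain ⟨a, ha, hmin⟩ := exists_fmin x (topSet_nonempty x h1 h2)
    exact ⟨a, hEq ▸ ha, le_of_eq hmin.symm⟩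
  · obtain ⟨a, haU, haT⟩ := Finset.not_subset.mp hUT
    refine ⟨a, haU, le_fmin x (topSet_nonempty x h1 h2) fun b hb =>
      topSet_rel x hb (Finset.mem_sdiff.mpr ⟨hUB haU, haT⟩)⟩

/-- Any subset of `B` of size at least `|B| - j` contains an element whose `x`-value
is at least the `(j+1)`-th largest `x`-value over `B`. -/
lemma exists_fmax_sdiff_le (x : Fin K → ℝ) {B U : Finset (Fin K)} {j : ℕ}
    (h2 : j < B.card) (hUB : U ⊆ B) (hU : B.card - j ≤ U.card) :
    ∃ a ∈ U, fmax K x (B \ topSet K x B j) ≤ x a := by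
  by_cases hUT : U ⊆ B \ topSet K x B j
  · have hEq : U = B \ topSet K x B j :=
      Finset.eq_of_subset_of_card_le hUT
        (by rw [Finset.card_sdiff_of_subset (topSet_subset x B j), card_topSet x h2.le]; exact hU)
    obtain ⟨a, ha, hmax⟩ := exists_fmax x (sdiff_topSet_nonempty x h2)
    exact ⟨a, hEq ▸ ha, le_of_eq hmax⟩
  · obtain ⟨a, haU, haT⟩ := Finset.not_subset.mp hUT
    have haTop : a ∈ topSet K x B j := by
      by_contra h
      exact haT (Finset.mem_sdiff.mpr ⟨hUB haU, h⟩)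
    exact ⟨a, haU, fmax_le x (sdiff_topSet_nonempty x h2) fun b hb =>
      topSet_rel x haTop hb⟩

/-- The `j`-th largest order statistic is `ε`-Lipschitz in `‖x - y‖_∞`. -/
lemma fmin_topSet_lip {x y : Fin K → ℝ} {ε : ℝ} (hxy : ∀ i, |x i - y i| ≤ ε)
    {B : Finset (Fin K)} {j : ℕ} (h1 : 1 ≤ j) (h2 : j ≤ B.card) :
    fmin K x (topSet K x B j) - ε ≤ fmin K y (topSet K y B j) := by
  obtain ⟨a, haT, ha⟩ := exists_le_fmin_topSet y h1 h2 (topSet_subset x B j)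
    (le_of_eq (card_topSet x h2).symm)
  have h3 := fmin_le x haT
  have h4 := abs_le.mp (hxy a)
  linarith

lemma fmax_sdiff_topSet_lip {x y : Fin K → ℝ} {ε : ℝ} (hxy : ∀ i, |x i - y i| ≤ ε)
    {B : Finset (Fin K)} {j : ℕ} (h2 : j < B.card) :
    fmax K y (B \ topSet K y B j) ≤ fmax K x (B \ topSet K x B j) + ε := by
  obtain ⟨a, haT, ha⟩ := exists_fmax_sdiff_le y h2
    (Finset.sdiff_subset)
    (le_of_eq (by rw [Finset.card_sdiff_of_subset (topSet_subset x B j), card_topSet x h2.le]))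
  have h3 := le_fmax x haT
  have h4 := abs_le.mp (hxy a)
  linarith

/-- The gap at position `j` is `2ε`-Lipschitz. -/
lemma gap_lip {x y : Fin K → ℝ} {ε : ℝ} (hxy : ∀ i, |x i - y i| ≤ ε)
    {B : Finset (Fin K)} {j : ℕ} (h1 : 1 ≤ j) (h2 : j < B.card) :
    |gapX K x (topSet K x B j) B - gapX K y (topSet K y B j) B| ≤ 2 * ε := by
  have hyx := abs_sub_comm' hxy
  have a1 := fmin_topSet_lip hxy h1 h2.le
  have a2 := fmin_topSet_lip hyx h1 h2.le
  have b1 := fmax_sdiff_topSet_lip hxy h2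
  have b2 := fmax_sdiff_topSet_lip hyx h2
  rw [abs_le]
  constructor <;> unfold gapX <;> linarith

/-- If the gap at position `j` under `x` exceeds `2ε`, the top-`j` sets of `x` and `y`
coincide. -/
lemma topSet_eq_of_gap {x y : Fin K → ℝ} {ε : ℝ} (hxy : ∀ i, |x i - y i| ≤ ε)
    {B : Finset (Fin K)} {j : ℕ} (h1 : 1 ≤ j) (h2 : j < B.card)
    (hgap : 2 * ε < gapX K x (topSet K x B j) B) :
    topSet K y B j = topSet K x B j := by
  by_contra hne
  have hcard : (topSet K y B j).card = (topSet K x B j).card := by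
    rw [card_topSet y h2.le, card_topSet x h2.le]
  obtain ⟨a, haX, haY⟩ : ∃ a, a ∈ topSet K x B j ∧ a ∉ topSet K y B j := by
    by_contra h
    push_neg at h
    exact hne (Finset.eq_of_subset_of_card_le (fun a ha => h a ha) hcard.le).symm
  obtain ⟨b, hbY, hbX⟩ : ∃ b, b ∈ topSet K y B j ∧ b ∉ topSet K x B j := by
    by_contra h
    push_neg at h
    exact hne (Finset.eq_of_subset_of_card_le (fun b hb => h b hb) hcard.ge)
  have hb2 : b ∈ B \ topSet K x B j :=
    Finset.mem_sdiff.mpr ⟨topSet_subset y B j hbY, hbX⟩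
  have ha2 : a ∈ B \ topSet K y B j :=
    Finset.mem_sdiff.mpr ⟨topSet_subset x B j haX, haY⟩
  have e1 : fmin K x (topSet K x B j) ≤ x a := fmin_le x haX
  have e2 : x b ≤ fmax K x (B \ topSet K x B j) := le_fmax x hb2
  have e3 : y a ≤ y b := topSet_rel y hbY ha2
  have e4 := abs_le.mp (hxy a)
  have e5 := abs_le.mp (hxy b)
  rw [gapX] at hgap
  linarith

end Aux

section Algo

variable {K m : ℕ} {c : List (Finset (Fin K)) → ℝ} {ε : ℝ} {x y : Fin K → ℝ}

lemma valid_suffix {l q : List (Finset (Fin K))} (hv : Valid K m l) (hq : q <:+ l) :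
    Valid K m q := by
  induction l with
  | nil => rw [List.suffix_nil.mp hq]; exact hv
  | cons T l ih =>
    rcases List.suffix_cons_iff.mp hq with h | h
    · exact h ▸ hv
    · exact ih hv.1 h

lemma margin {l : List (Finset (Fin K))} (hns : ¬ stopAt K m c ε x l) {j : ℕ}
    (hj1 : 1 ≤ j) (hj2 : j < (Bnode K m l).card) :
    6 * ε < |gapX K x (topSet K x (Bnode K m l) j) (Bnode K m l)
      - c l * rangeX K x (Bnode K m l)| := by
  simp only [stopAt] at hns
  push_neg at hns
  have h := hns l ((List.mem_tails _ _).mpr (List.suffix_refl l)) j hj1 hj2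
  simpa [Nat.sub_self] using h

lemma cmul_range_lip (hc0 : 0 ≤ c l) (hc1 : c l ≤ 1) (hxy : ∀ i, |x i - y i| ≤ ε)
    {B : Finset (Fin K)} (hB : B.Nonempty) :
    |c l * rangeX K x B - c l * rangeX K y B| ≤ 2 * ε := by
  rw [← mul_sub, abs_mul, abs_of_nonneg hc0]
  calc c l * |rangeX K x B - rangeX K y B| ≤ 1 * (2 * ε) := by
        apply mul_le_mul hc1 (rangeX_lip hxy hB) (abs_nonneg _) zero_le_one
    _ = 2 * ε := one_mul _

lemma stop_transfer (hε : 0 < ε) (hK1 : 1 ≤ K)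
    (hc : ∀ l, Valid K m l → c l ∈ Set.Icc (0 : ℝ) (1 / K))
    (hxy : ∀ i, |x i - y i| ≤ ε)
    {l : List (Finset (Fin K))} (hv : Valid K m l)
    (hs : stopAt K m c ε x l) (T : Finset (Fin K)) :
    stopAt K m c ε y (T :: l) := by
  obtain ⟨q, hq, j, hj1, hj2, hb⟩ := hs
  have hsuf : q <:+ l := (List.mem_tails _ _).mp hq
  refine ⟨q, (List.mem_tails _ _).mpr (hsuf.trans (List.suffix_cons T l)), j, hj1, hj2, ?_⟩
  have hvq := valid_suffix hv hsuf
  obtain ⟨hc0, hc1⟩ := hc q hvq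
  have hc1' : c q ≤ 1 := hc1.trans (by
    rw [div_le_one (by exact_mod_cast (by omega : 0 < K))]
    exact_mod_cast hK1)
  have hBne : (Bnode K m q).Nonempty := Finset.card_pos.mp (by omega)
  have hgl := abs_le.mp (gap_lip hxy hj1 hj2 (B := Bnode K m q))
  have hcd := abs_le.mp (cmul_range_lip hc0 hc1' hxy hBne)
  have hb' := abs_le.mp hb
  have hlen : q.length ≤ l.length := hsuf.length_le
  have hco : ((T :: l).length - q.length + 1 : ℕ) = (l.length - q.length + 1) + 1 := by
    simp only [List.length_cons]; omega
  rw [hco]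
  have hA : (0:ℝ) ≤ ((l.length - q.length + 1 : ℕ) : ℝ) * (6 * ε) := by positivity
  push_cast
  rw [abs_le]
  constructor <;> push_cast at hb' <;> nlinarith [hb'.1, hb'.2, hgl.1, hgl.2, hcd.1, hcd.2, hε]

lemma run_succ (n : ℕ) (l : List (Finset (Fin K))) :
    run K m c ε x (n + 1) l =
      if Bnode K m l = ∅ then l
      else if stopAt K m c ε x l then l
      else run K m c ε x n (descend K m c x l) := rfl

lemma run_of_stop {l : List (Finset (Fin K))} (hs : stopAt K m c ε x l) :
    ∀ n, run K m c ε x n l = l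
  | 0 => rfl
  | (n + 1) => by
    rw [run_succ]
    by_cases h1 : Bnode K m l = ∅
    · rw [if_pos h1]
    · rw [if_neg h1, if_pos hs]

lemma run_of_nodescend {l : List (Finset (Fin K))} (hs : ¬ stopAt K m c ε x l)
    (hd : descend K m c x l = l) : ∀ n, run K m c ε x n l = l
  | 0 => rfl
  | (n + 1) => by
    rw [run_succ]
    by_cases h1 : Bnode K m l = ∅
    · rw [if_pos h1]
    · rw [if_neg h1, if_neg hs, hd]
      exact run_of_nodescend hs hd n

/-- If the run on `x` does not stop at `l`, any split condition satisfied by `x`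
is satisfied by `y` as well. -/
lemma cond_mp (hε : 0 < ε) (hK1 : 1 ≤ K)
    (hc : ∀ l, Valid K m l → c l ∈ Set.Icc (0 : ℝ) (1 / K))
    (hxy : ∀ i, |x i - y i| ≤ ε)
    {l : List (Finset (Fin K))} (hv : Valid K m l)
    (hnx : ¬ stopAt K m c ε x l) {j : ℕ}
    (h : 1 ≤ j ∧ j < (Bnode K m l).card ∧
      c l * rangeX K x (Bnode K m l)
        ≤ gapX K x (topSet K x (Bnode K m l) j) (Bnode K m l)) :
    1 ≤ j ∧ j < (Bnode K m l).card ∧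
      c l * rangeX K y (Bnode K m l)
        ≤ gapX K y (topSet K y (Bnode K m l) j) (Bnode K m l) := by
  obtain ⟨h1, h2, h3⟩ := h
  refine ⟨h1, h2, ?_⟩
  obtain ⟨hc0, hc1⟩ := hc l hv
  have hc1' : c l ≤ 1 := hc1.trans (by
    rw [div_le_one (by exact_mod_cast (by omega : 0 < K))]
    exact_mod_cast hK1)
  have hBne : (Bnode K m l).Nonempty := Finset.card_pos.mp (by omega)
  have hm := margin hnx h1 h2
  rw [abs_of_nonneg (sub_nonneg.mpr h3)] at hm
  have hgl := abs_le.mp (gap_lip hxy h1 h2 (B := Bnode K m l))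
  have hcd := abs_le.mp (cmul_range_lip hc0 hc1' hxy hBne)
  linarith

lemma descend_eq (hε : 0 < ε) (hK1 : 1 ≤ K)
    (hc : ∀ l, Valid K m l → c l ∈ Set.Icc (0 : ℝ) (1 / K))
    (hxy : ∀ i, |x i - y i| ≤ ε)
    {l : List (Finset (Fin K))} (hv : Valid K m l)
    (hnx : ¬ stopAt K m c ε x l) (hny : ¬ stopAt K m c ε y l) :
    descend K m c x l = descend K m c y l := by
  have hyx := abs_sub_comm' hxy
  by_cases hex : ∃ j, 1 ≤ j ∧ j < (Bnode K m l).card ∧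
      c l * rangeX K x (Bnode K m l)
        ≤ gapX K x (topSet K x (Bnode K m l) j) (Bnode K m l)
  · have hey : ∃ j, 1 ≤ j ∧ j < (Bnode K m l).card ∧
        c l * rangeX K y (Bnode K m l)
          ≤ gapX K y (topSet K y (Bnode K m l) j) (Bnode K m l) :=
      ⟨Nat.find hex, cond_mp hε hK1 hc hxy hv hnx (Nat.find_spec hex)⟩
    rw [descend, descend, dif_pos hex, dif_pos hey]
    have hfind : Nat.find hex = Nat.find hey :=
      le_antisymm (Nat.find_min' hex (cond_mp hε hK1 hc hyx hv hny (Nat.find_spec hey)))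
        (Nat.find_min' hey (cond_mp hε hK1 hc hxy hv hnx (Nat.find_spec hex)))
    obtain ⟨h1, h2, h3⟩ := Nat.find_spec hex
    obtain ⟨hc0, _⟩ := hc l hv
    have hm := margin hnx h1 h2
    rw [abs_of_nonneg (sub_nonneg.mpr h3)] at hm
    have hcr : 0 ≤ c l * rangeX K x (Bnode K m l) :=
      mul_nonneg hc0 (rangeX_nonneg x (Finset.card_pos.mp (by omega)))
    have hgap : 2 * ε < gapX K x (topSet K x (Bnode K m l) (Nat.find hex)) (Bnode K m l) := by
      linarith
    rw [← hfind, topSet_eq_of_gap hxy h1 h2 hgap]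
  · have hey : ¬ ∃ j, 1 ≤ j ∧ j < (Bnode K m l).card ∧
        c l * rangeX K y (Bnode K m l)
          ≤ gapX K y (topSet K y (Bnode K m l) j) (Bnode K m l) := by
      intro ⟨j, hj⟩
      exact hex ⟨j, cond_mp hε hK1 hc hyx hv hny hj⟩
    rw [descend, descend, dif_neg hex, dif_neg hey]

lemma run_close (hε : 0 < ε) (hK1 : 1 ≤ K)
    (hc : ∀ l, Valid K m l → c l ∈ Set.Icc (0 : ℝ) (1 / K))
    (hxy : ∀ i, |x i - y i| ≤ ε) :
    ∀ n (l : List (Finset (Fin K))), Valid K m l →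
      run K m c ε x n l = run K m c ε y n l ∨
      (∃ T, run K m c ε x n l = T :: run K m c ε y n l) ∨
      (∃ T, run K m c ε y n l = T :: run K m c ε x n l) := by
  intro n
  have hyx := abs_sub_comm' hxy
  induction n with
  | zero => exact fun l _ => Or.inl rfl
  | succ n ih =>
    intro l hv
    by_cases hB : Bnode K m l = ∅
    · left; rw [run_succ, run_succ, if_pos hB, if_pos hB]
    by_cases hsx : stopAt K m c ε x l <;> by_cases hsy : stopAt K m c ε y l
    · left; rw [run_of_stop hsx, run_of_stop hsy]
    · -- x stops at l, y does not
      have hrx : run K m c ε x (n + 1) l = l := run_of_stop hsx _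
      have hdy : run K m c ε y (n + 1) l = run K m c ε y n (descend K m c y l) := by
        rw [run_succ, if_neg hB, if_neg hsy]
      by_cases hey : ∃ j, 1 ≤ j ∧ j < (Bnode K m l).card ∧
          c l * rangeX K y (Bnode K m l)
            ≤ gapX K y (topSet K y (Bnode K m l) j) (Bnode K m l)
      · have hd : descend K m c y l
            = topSet K y (Bnode K m l) (Nat.find hey) :: l := by
          rw [descend, dif_pos hey]
        have hstop : stopAt K m c ε y (topSet K y (Bnode K m l) (Nat.find hey) :: l) :=
          stop_transfer hε hK1 hc hxy hv hsx _
        exact Or.inr (Or.inr ⟨_, by rw [hdy, hd, run_of_stop hstop, hrx]⟩)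
      · have hd : descend K m c y l = l := by rw [descend, dif_neg hey]
        left
        rw [hrx, hdy, hd, run_of_nodescend hsy hd]
    · -- y stops at l, x does not
      have hry : run K m c ε y (n + 1) l = l := run_of_stop hsy _
      have hdx : run K m c ε x (n + 1) l = run K m c ε x n (descend K m c x l) := by
        rw [run_succ, if_neg hB, if_neg hsx]
      by_cases hex : ∃ j, 1 ≤ j ∧ j < (Bnode K m l).card ∧
          c l * rangeX K x (Bnode K m l)
            ≤ gapX K x (topSet K x (Bnode K m l) j) (Bnode K m l)
      · have hd : descend K m c x l
            = topSet K x (Bnode K m l) (Nat.find hex) :: l := by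
          rw [descend, dif_pos hex]
        have hstop : stopAt K m c ε x (topSet K x (Bnode K m l) (Nat.find hex) :: l) :=
          stop_transfer hε hK1 hc hyx hv hsy _
        exact Or.inr (Or.inl ⟨_, by rw [hdx, hd, run_of_stop hstop, hry]⟩)
      · have hd : descend K m c x l = l := by rw [descend, dif_neg hex]
        left
        rw [hry, hdx, hd, run_of_nodescend hsx hd]
    · -- neither stops at l
      have hdx : run K m c ε x (n + 1) l = run K m c ε x n (descend K m c x l) := by
        rw [run_succ, if_neg hB, if_neg hsx]
      have hdy : run K m c ε y (n + 1) l = run K m c ε y n (descend K m c y l) := by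
        rw [run_succ, if_neg hB, if_neg hsy]
      have hde := descend_eq hε hK1 hc hxy hv hsx hsy
      by_cases hex : ∃ j, 1 ≤ j ∧ j < (Bnode K m l).card ∧
          c l * rangeX K x (Bnode K m l)
            ≤ gapX K x (topSet K x (Bnode K m l) j) (Bnode K m l)
      · have hd : descend K m c x l
            = topSet K x (Bnode K m l) (Nat.find hex) :: l := by
          rw [descend, dif_pos hex]
        obtain ⟨h1, h2, _⟩ := Nat.find_spec hex
        have hvchild : Valid K m (topSet K x (Bnode K m l) (Nat.find hex) :: l) := by
          refine ⟨hv, ?_, ?_⟩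
          · exact topSet_nonempty x h1 h2.le
          · refine Finset.ssubset_iff_subset_ne.mpr ⟨topSet_subset x _ _, fun h => ?_⟩
            have hct := card_topSet x (B := Bnode K m l) h2.le
            rw [h] at hct
            omega
        rw [hdx, hdy, ← hde, hd]
        exact ih _ hvchild
      · have hd : descend K m c x l = l := by rw [descend, dif_neg hex]
        rw [hdx, hdy, ← hde, hd]
        exact ih l hv

end Algo

/-- Lemma 2.4, item 1: if ‖x - y‖_∞ ≤ ε then the outputs of the partition algorithm on
x and on y are at graph distance at most 1 in the tree T_{K,m} (equal, or one is a
child of the other). -/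
theorem stmt5 (K m : ℕ) (hm : 1 ≤ m) (hK : m ≤ K) (ε : ℝ) (hε : 0 < ε)
    (c : List (Finset (Fin K)) → ℝ)
    (hc : ∀ l, Valid K m l → c l ∈ Set.Icc (0 : ℝ) (1 / K))
    (x y : Fin K → ℝ)
    (hx : ∀ i, x i ∈ Set.Icc (0 : ℝ) 1) (hy : ∀ i, y i ∈ Set.Icc (0 : ℝ) 1)
    (hxy : ∀ i, |x i - y i| ≤ ε) :
    Pmap K m c ε x = Pmap K m c ε y ∨
      (∃ T, Pmap K m c ε x = T :: Pmap K m c ε y) ∨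
      (∃ T, Pmap K m c ε y = T :: Pmap K m c ε x) := by
  exact run_close hε (hm.trans hK) hc hxy K [] trivial

end MPB
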